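/- (Enflo's theorem on the Hamming cube.) Let n ≥ 1 and let H_n = {0,1}^n be equipped with the Hamming metric d_1. Then: (i) for every real Hilbert space H, every injective map f : H_n → H, and all constants A, B > 0 with A·d_1(x,y) ≤ ‖f(x) − f(y)‖_H ≤ B·d_1(x,y) for all x, y ∈ H_n, one has B/A ≥ √n; and (ii) there exists a map f : H_n → ℝ^n (with the Euclidean norm) and constants A, B > 0 with B/A = √n such that A·d_1(x,y) ≤ ‖f(x) − f(y)‖ ≤ B·d_1(x,y) for all x, y ∈ H_n. Hence the Euclidean distortion of (H_n, d_1) equals √n. -/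

import Mathlib

variable {H : Type} [NormedAddCommGroup H] [InnerProductSpace ℝ H]

lemma sq_norm_add_le (u v : H) : ‖u + v‖^2 ≤ 2*‖u‖^2 + 2*‖v‖^2 := by
  have h := norm_add_le u v
  have h2 := mul_self_le_mul_self (norm_nonneg (u+v)) h
  nlinarith [sq_nonneg (‖u‖ - ‖v‖)]

lemma key_pt (a a' b b' : H) :
    ‖a - b'‖^2 + ‖b - a'‖^2 ≤ ‖a - a'‖^2 + ‖b - b'‖^2 + ‖a - b‖^2 + ‖a' - b'‖^2 := by
  have hpar := parallelogram_law_with_norm ℝ (a - b') (b - a')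
  have h1 : (a - b') + (b - a') = (a - a') + (b - b') := by abel
  have h2 : (a - b') - (b - a') = (a - b) + (a' - b') := by abel
  have e1 := sq_norm_add_le (a - a') (b - b')
  have e2 := sq_norm_add_le (a - b) (a' - b')
  rw [h1, h2] at hpar
  nlinarith [sq_nonneg ‖a-b'‖, sq_nonneg ‖b-a'‖]

lemma enflo_key : ∀ (n : ℕ) (f : (Fin n → Bool) → H),
    ∑ x : Fin n → Bool, ‖f x - f (fun i => !x i)‖^2 ≤
    ∑ x : Fin n → Bool, ∑ i, ‖f x - f (Function.update x i (!x i))‖^2 := by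
  intro n
  induction n with
  | zero =>
    intro f
    have h : ∀ x : Fin 0 → Bool, (fun i => !x i) = x := fun x => funext fun i => i.elim0
    simp [h]
  | succ n ih =>
    intro f
    -- split sums over the first coordinate
    have hsum : ∀ (F : (Fin (n+1) → Bool) → ℝ), ∑ x, F x =
        ∑ x' : Fin n → Bool, (F (Fin.cons false x') + F (Fin.cons true x')) := by
      intro F
      rw [← (Fin.consEquiv (fun _ => Bool)).sum_comp F, Fintype.sum_prod_type,
        Fintype.sum_bool]
      rw [← Finset.sum_add_distrib]
      exact Finset.sum_congr rfl fun x' _ => add_comm _ _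
    rw [hsum, hsum]
    have hN : Function.Involutive (fun (x : Fin n → Bool) => fun i => !x i) := by
      intro x; funext i; simp
    set N : (Fin n → Bool) → (Fin n → Bool) := fun x => fun i => !x i with hNdef
    set a : (Fin n → Bool) → H := fun x' => f (Fin.cons false x') with ha
    set b : (Fin n → Bool) → H := fun x' => f (Fin.cons true x') with hb
    have hnegcons : ∀ (c : Bool) (x' : Fin n → Bool),
        (fun i : Fin (n+1) => !((Fin.cons c x' : Fin (n+1) → Bool) i)) = Fin.cons (!c) (N x') := by
      intro c x'
      funext i
      refine Fin.cases ?_ ?_ i <;> simp [hNdef]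
    calc ∑ x' : Fin n → Bool,
          (‖f (Fin.cons false x') - f (fun i => !(Fin.cons false x' : Fin (n+1) → Bool) i)‖^2 +
           ‖f (Fin.cons true x') - f (fun i => !(Fin.cons true x' : Fin (n+1) → Bool) i)‖^2)
        = ∑ x' : Fin n → Bool, (‖a x' - b (N x')‖^2 + ‖b x' - a (N x')‖^2) := by
          refine Finset.sum_congr rfl fun x' _ => ?_
          rw [hnegcons, hnegcons]
          simp [ha, hb]
      _ ≤ ∑ x' : Fin n → Bool,
            ((‖a x' - b x'‖^2 + ‖a (N x') - b (N x')‖^2) +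
             (‖a x' - a (N x')‖^2 + ‖b x' - b (N x')‖^2)) := by
          refine Finset.sum_le_sum fun x' _ => ?_
          have := key_pt (a x') (a (N x')) (b x') (b (N x'))
          linarith
      _ = (∑ x' : Fin n → Bool, ‖a x' - b x'‖^2) + (∑ x' : Fin n → Bool, ‖a (N x') - b (N x')‖^2)
            + ((∑ x' : Fin n → Bool, ‖a x' - a (N x')‖^2) + ∑ x' : Fin n → Bool, ‖b x' - b (N x')‖^2) := by
          rw [← Finset.sum_add_distrib, ← Finset.sum_add_distrib, ← Finset.sum_add_distrib]
      _ = (∑ x' : Fin n → Bool, ‖a x' - b x'‖^2) + (∑ x' : Fin n → Bool, ‖a x' - b x'‖^2)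
            + ((∑ x' : Fin n → Bool, ‖a x' - a (N x')‖^2) + ∑ x' : Fin n → Bool, ‖b x' - b (N x')‖^2) := by
          congr 2
          exact Equiv.sum_comp (hN.toPerm N) (fun x' => ‖a x' - b x'‖^2)
      _ ≤ (∑ x' : Fin n → Bool, ‖a x' - b x'‖^2) + (∑ x' : Fin n → Bool, ‖a x' - b x'‖^2)
            + ((∑ x' : Fin n → Bool, ∑ j, ‖a x' - a (Function.update x' j (!x' j))‖^2)
              + ∑ x' : Fin n → Bool, ∑ j, ‖b x' - b (Function.update x' j (!x' j))‖^2) := by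
          have h1 := ih a
          have h2 := ih b
          simp only [hNdef]
          gcongr
      _ = ∑ x' : Fin n → Bool,
            ((‖a x' - b x'‖^2 + ∑ j, ‖a x' - a (Function.update x' j (!x' j))‖^2) +
             (‖b x' - a x'‖^2 + ∑ j, ‖b x' - b (Function.update x' j (!x' j))‖^2)) := by
          simp only [← Finset.sum_add_distrib]
          refine Finset.sum_congr rfl fun x' _ => ?_
          rw [norm_sub_rev (b x'), Finset.sum_add_distrib]
          ring
      _ = ∑ x' : Fin n → Bool,
            ((∑ i, ‖f (Fin.cons false x') - f (Function.update (Fin.cons false x' : Fin (n+1) → Bool) i (!(Fin.cons false x' : Fin (n+1) → Bool) i))‖^2) +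
             (∑ i, ‖f (Fin.cons true x') - f (Function.update (Fin.cons true x' : Fin (n+1) → Bool) i (!(Fin.cons true x' : Fin (n+1) → Bool) i))‖^2)) := by
          refine Finset.sum_congr rfl fun x' _ => ?_
          have hupd : ∀ (c : Bool),
              (∑ i, ‖f (Fin.cons c x') - f (Function.update (Fin.cons c x' : Fin (n+1) → Bool) i (!(Fin.cons c x' : Fin (n+1) → Bool) i))‖^2)
              = ‖f (Fin.cons c x') - f (Fin.cons (!c) x')‖^2
                + ∑ j, ‖f (Fin.cons c x') - f (Fin.cons c (Function.update x' j (!x' j)))‖^2 := by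
            intro c
            rw [Fin.sum_univ_succ]
            congr 1
            · rw [Fin.cons_zero, Fin.update_cons_zero]
            · refine Finset.sum_congr rfl fun j _ => ?_
              rw [Fin.cons_succ, ← Fin.cons_update]
          rw [hupd, hupd]
          simp [ha, hb]



def cubeMap (n : ℕ) : (Fin n → Bool) → EuclideanSpace ℝ (Fin n) :=
  fun x => WithLp.toLp 2 (fun i => if x i then (1:ℝ) else 0)

lemma cubeMap_norm (n : ℕ) (x y : Fin n → Bool) :
    ‖cubeMap n x - cubeMap n y‖ =
      Real.sqrt ((Finset.univ.filter fun i => x i ≠ y i).card : ℝ) := by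
  rw [EuclideanSpace.norm_eq]
  congr 1
  have hpt : ∀ i : Fin n, ‖(cubeMap n x - cubeMap n y) i‖^2
      = if x i ≠ y i then (1:ℝ) else 0 := by
    intro i
    have : (cubeMap n x - cubeMap n y) i
        = (if x i then (1:ℝ) else 0) - (if y i then (1:ℝ) else 0) := rfl
    rw [this]
    cases hx : x i <;> cases hy : y i <;> simp
  rw [Finset.sum_congr rfl fun i _ => hpt i, Finset.sum_ite, Finset.sum_const,
    Finset.sum_const]
  simp

/-- Enflo's theorem: For `n ≥ 1`, the Hamming cube `H_n = {0,1}^n` with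
the Hamming metric `d₁` has Euclidean distortion exactly `√n`:
(i) every injective bi-Lipschitz map `f : H_n → H` into a real Hilbert space, with
constants `A, B > 0` satisfying `A·d₁(x,y) ≤ ‖f x - f y‖ ≤ B·d₁(x,y)`, has `B/A ≥ √n`;
(ii) there is a map `f : H_n → ℝⁿ` (Euclidean norm) and constants `A, B > 0` with
`B/A = √n` satisfying the same two-sided inequality. The cube is modelled as
`Fin n → Bool`, and `d₁(x,y)` is the number of differing coordinates. -/
theorem enflo_hamming_cube_distortion (n : ℕ) (hn : 1 ≤ n) :
    (∀ (H : Type) [NormedAddCommGroup H] [InnerProductSpace ℝ H] [CompleteSpace H],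
      ∀ f : (Fin n → Bool) → H, Function.Injective f →
      ∀ A B : ℝ, 0 < A → 0 < B →
      (∀ x y : Fin n → Bool,
        A * ((Finset.univ.filter fun i => x i ≠ y i).card : ℝ) ≤ ‖f x - f y‖ ∧
        ‖f x - f y‖ ≤ B * ((Finset.univ.filter fun i => x i ≠ y i).card : ℝ)) →
      Real.sqrt n ≤ B / A) ∧
    (∃ (f : (Fin n → Bool) → EuclideanSpace ℝ (Fin n)) (A B : ℝ),
      0 < A ∧ 0 < B ∧ B / A = Real.sqrt n ∧
      ∀ x y : Fin n → Bool,
        A * ((Finset.univ.filter fun i => x i ≠ y i).card : ℝ) ≤ ‖f x - f y‖ ∧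
        ‖f x - f y‖ ≤ B * ((Finset.univ.filter fun i => x i ≠ y i).card : ℝ)) := by
  have hn' : (1:ℝ) ≤ (n:ℝ) := by exact_mod_cast hn
  have hcard : (Fintype.card (Fin n → Bool) : ℝ) = 2^n := by
    simp [Fintype.card_fun]
  constructor
  · intro H _ _ _ f hf A B hA hB h
    have key := enflo_key n f
    -- lower bound each diagonal term
    have hdiag : ∀ x : Fin n → Bool, (A * n)^2 ≤ ‖f x - f (fun i => !x i)‖^2 := by
      intro x
      have hd : ((Finset.univ.filter fun i => x i ≠ (fun i => !x i) i).card : ℝ) = n := by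
        have : ∀ i ∈ Finset.univ, x i ≠ (fun i => !x i) i := by
          intro i _
          simp
        rw [Finset.filter_true_of_mem this, Finset.card_univ, Fintype.card_fin]
      have := (h x (fun i => !x i)).1
      rw [hd] at this
      exact pow_le_pow_left₀ (by positivity) this 2
    have hedge : ∀ (x : Fin n → Bool) (i : Fin n),
        ‖f x - f (Function.update x i (!x i))‖^2 ≤ B^2 := by
      intro x i
      have hd : ((Finset.univ.filter fun j => x j ≠ Function.update x i (!x i) j).card : ℝ) = 1 := by
        have : (Finset.univ.filter fun j => x j ≠ Function.update x i (!x i) j) = {i} := by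
          ext j
          rcases eq_or_ne j i with rfl | hji
          · simp
          · simp [Function.update_of_ne hji, hji]
        rw [this]
        simp
      have h2 := (h x (Function.update x i (!x i))).2
      rw [hd, mul_one] at h2
      exact pow_le_pow_left₀ (norm_nonneg _) h2 2
    have hL : (2^n : ℝ) * (A*n)^2 ≤ ∑ x : Fin n → Bool, ‖f x - f (fun i => !x i)‖^2 := by
      calc (2^n : ℝ) * (A*n)^2 = ∑ _x : Fin n → Bool, (A*n)^2 := by
            rw [Finset.sum_const, Finset.card_univ, nsmul_eq_mul, hcard]
        _ ≤ _ := Finset.sum_le_sum fun x _ => hdiag x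
    have hR : (∑ x : Fin n → Bool, ∑ i, ‖f x - f (Function.update x i (!x i))‖^2)
        ≤ (2^n : ℝ) * (n * B^2) := by
      calc (∑ x : Fin n → Bool, ∑ i, ‖f x - f (Function.update x i (!x i))‖^2)
          ≤ ∑ _x : Fin n → Bool, ∑ _i : Fin n, B^2 :=
            Finset.sum_le_sum fun x _ => Finset.sum_le_sum fun i _ => hedge x i
        _ = (2^n : ℝ) * (n * B^2) := by
            simp [Finset.sum_const, Finset.card_univ, hcard, Fintype.card_fin]
    have hmain : (A*n)^2 ≤ n * B^2 := by
      have h2 : (0:ℝ) < 2^n := by positivity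
      have := hL.trans (key.trans hR)
      nlinarith
    have hAB : A^2 * n ≤ B^2 := by nlinarith
    have h2 : A * Real.sqrt n ≤ B := by
      have hs : Real.sqrt (A^2 * n) ≤ Real.sqrt (B^2) := Real.sqrt_le_sqrt hAB
      rwa [Real.sqrt_mul (sq_nonneg A), Real.sqrt_sq hA.le, Real.sqrt_sq hB.le] at hs
    rw [le_div_iff₀ hA]
    linarith
  · have hsn : 0 < Real.sqrt n := Real.sqrt_pos.2 (by linarith)
    refine ⟨cubeMap n, (Real.sqrt n)⁻¹, 1, by positivity, one_pos, by field_simp, ?_⟩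
    intro x y
    set d : ℕ := (Finset.univ.filter fun i => x i ≠ y i).card with hd
    have hdn : (d:ℝ) ≤ n := by
      have := Finset.card_filter_le Finset.univ (fun i => x i ≠ y i)
      rw [Finset.card_univ, Fintype.card_fin] at this
      exact_mod_cast this
    have hd0 : (0:ℝ) ≤ (d:ℝ) := Nat.cast_nonneg d
    rw [cubeMap_norm, ← hd]
    constructor
    · rw [inv_mul_eq_div, div_le_iff₀ hsn]
      calc (d:ℝ) = Real.sqrt ((d:ℝ) * d) := (Real.sqrt_mul_self hd0).symm
        _ ≤ Real.sqrt ((d:ℝ) * n) :=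
            Real.sqrt_le_sqrt (mul_le_mul_of_nonneg_left hdn hd0)
        _ = Real.sqrt d * Real.sqrt n := Real.sqrt_mul hd0 n
    · rw [one_mul]
      rcases Nat.eq_zero_or_pos d with h0 | h1
      · simp [h0]
      · have h1' : (1:ℝ) ≤ (d:ℝ) := by exact_mod_cast h1
        calc Real.sqrt d ≤ Real.sqrt ((d:ℝ) * d) :=
              Real.sqrt_le_sqrt (le_mul_of_one_le_left hd0 h1')
          _ = d := Real.sqrt_mul_self hd0
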